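/- The maximum chromatic number among connected graphs with first Betti number at most g is attained by the largest complete graph K_n with β(K_n) = (n-1)(n-2)/2 ≤ g; that maximum equals n = ⌊(3 + √(8g+1))/2⌋. -/

import Mathlib

open SimpleGraph Finset

namespace MaxChromBetti

lemma reachable_induce_of_walk {V : Type} {G : SimpleGraph V} {s : Set V} {a b : V}
    (w : G.Walk a b) (hw : ∀ x ∈ w.support, x ∈ s) :
    (G.induce s).Reachable ⟨a, hw a w.start_mem_support⟩ ⟨b, hw b w.end_mem_support⟩ := by
  induction w with
  | nil => rfl
  | @cons u x v h p ih =>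
    have hx : x ∈ s := hw x (by simp)
    have hu : u ∈ s := hw u (by simp)
    have h1 : (G.induce s).Adj ⟨u, hu⟩ ⟨x, hx⟩ := by
      simp [SimpleGraph.comap_adj, h]
    exact (h1.reachable).trans (ih (fun y hy => hw y (by simp [hy])))

instance instDecInduce {V : Type} (G : SimpleGraph V) [DecidableRel G.Adj] (s : Set V) :
    DecidableRel (G.induce s).Adj := fun a b =>
  decidable_of_iff (G.Adj a.val b.val) (by simp [SimpleGraph.induce])

variable {V : Type} [Fintype V] [DecidableEq V] (G : SimpleGraph V) [DecidableRel G.Adj] (v : V)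

lemma edge_del : (G.induce ({v}ᶜ : Set V)).edgeFinset.card + G.degree v = G.edgeFinset.card := by
  classical
  have hsub : G.incidenceFinset v ⊆ G.edgeFinset := by
    intro e he
    rw [mem_incidenceFinset] at he
    exact mem_edgeFinset.2 he.1
  have hcard : (G.induce ({v}ᶜ : Set V)).edgeFinset.card
      = (G.edgeFinset \ G.incidenceFinset v).card := by
    apply Finset.card_nbij (Sym2.map Subtype.val)
    · intro e he
      induction e with
      | _ a b =>
        simp only [Finset.mem_coe, mem_edgeFinset, mem_edgeSet] at he
        simp only [Finset.mem_coe, Sym2.map_pair_eq, mem_sdiff, mem_edgeFinset, mem_edgeSet,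
          mem_incidenceFinset, mk'_mem_incidenceSet_iff]
        refine ⟨he, ?_⟩
        rintro ⟨-, h | h⟩
        · exact a.prop h.symm
        · exact b.prop h.symm
    · intro e he e' he' h
      exact Sym2.map.injective Subtype.val_injective h
    · intro e he
      rw [Finset.coe_sdiff, Set.mem_diff] at he
      obtain ⟨he1, he2⟩ := he
      rw [Finset.mem_coe, mem_edgeFinset] at he1
      rw [Finset.mem_coe, mem_incidenceFinset] at he2
      induction e with
      | _ a b =>
        rw [mem_edgeSet] at he1
        have ha : a ≠ v := by
          rintro rfl
          exact he2 (G.mk'_mem_incidenceSet_iff.2 ⟨he1, Or.inl rfl⟩)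
        have hb : b ≠ v := by
          rintro rfl
          exact he2 (G.mk'_mem_incidenceSet_iff.2 ⟨he1, Or.inr rfl⟩)
        refine ⟨s(⟨a, ha⟩, ⟨b, hb⟩), ?_, by simp⟩
        rw [Finset.mem_coe, mem_edgeFinset, mem_edgeSet]
        simpa using he1
  rw [hcard, ← card_incidenceFinset_eq_degree, Finset.card_sdiff_add_card_eq_card hsub]

lemma comp_del : Nat.card (G.induce ({v}ᶜ : Set V)).ConnectedComponent + 1
    ≤ Nat.card G.ConnectedComponent + G.degree v := by
  classical
  set G' := G.induce ({v}ᶜ : Set V) with hG'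
  let φ : G' →g G := (SimpleGraph.Embedding.induce ({v}ᶜ : Set V)).toHom
  let gm : G'.ConnectedComponent → G.ConnectedComponent := ConnectedComponent.map φ
  have claim : ∀ C : G'.ConnectedComponent, gm C = G.connectedComponentMk v →
      ∃ u : ↥(G.neighborSet v), ∃ hu : u.val ∈ ({v}ᶜ : Set V),
        G'.connectedComponentMk ⟨u.val, hu⟩ = C := by
    intro C hC
    obtain ⟨x, rfl⟩ := C.exists_rep
    obtain ⟨b, hbv⟩ := x
    have hC' : G.connectedComponentMk (φ ⟨b, hbv⟩) = G.connectedComponentMk v := by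
      exact (ConnectedComponent.map_mk φ ⟨b, hbv⟩).symm.trans hC
    have hreach : G.Reachable v b := (ConnectedComponent.eq.mp hC').symm
    obtain ⟨w⟩ := hreach
    obtain ⟨p, hp⟩ := w.toPath
    cases p with
    | nil => exact absurd rfl hbv
    | @cons _ u _ hadj q =>
      have hvq : v ∉ q.support := by
        have := hp.support_nodup
        rw [Walk.support_cons] at this
        exact (List.nodup_cons.mp this).1
      have hq : ∀ y ∈ q.support, y ∈ ({v}ᶜ : Set V) := by
        intro y hy
        simp only [Set.mem_compl_iff, Set.mem_singleton_iff]
        rintro rfl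
        exact hvq hy
      have hu : u ∈ ({v}ᶜ : Set V) := hq u q.start_mem_support
      refine ⟨⟨u, hadj⟩, hu, ?_⟩
      have := reachable_induce_of_walk (s := ({v}ᶜ : Set V)) q hq
      have h2 : G'.connectedComponentMk ⟨u, hu⟩ = G'.connectedComponentMk ⟨b, _⟩ :=
        ConnectedComponent.sound this
      rw [h2]
      congr
  choose nb hmem heq using claim
  have inj_else : ∀ C1 C2 : G'.ConnectedComponent, gm C1 = gm C2 →
      gm C1 ≠ G.connectedComponentMk v → C1 = C2 := by
    intro C1 C2 hgm hne
    obtain ⟨x1, rfl⟩ := C1.exists_rep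
    obtain ⟨b1, h1⟩ := x1
    obtain ⟨x2, rfl⟩ := C2.exists_rep
    obtain ⟨b2, h2⟩ := x2
    have hgm' : G.connectedComponentMk b1 = G.connectedComponentMk b2 :=
      (ConnectedComponent.map_mk φ ⟨b1, h1⟩).symm.trans
        (hgm.trans (ConnectedComponent.map_mk φ ⟨b2, h2⟩))
    have hne' : G.connectedComponentMk b1 ≠ G.connectedComponentMk v := by
      intro h
      exact hne ((ConnectedComponent.map_mk φ ⟨b1, h1⟩).trans h)
    obtain ⟨w⟩ := ConnectedComponent.eq.mp hgm'
    have hsupp : ∀ y ∈ w.support, y ∈ ({v}ᶜ : Set V) := by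
      intro y hy
      simp only [Set.mem_compl_iff, Set.mem_singleton_iff]
      intro hyv
      exact hne' (ConnectedComponent.sound ⟨(w.takeUntil y hy).copy rfl hyv⟩)
    exact ConnectedComponent.sound (reachable_induce_of_walk w hsupp)
  classical
  let F : Option G'.ConnectedComponent → G.ConnectedComponent ⊕ ↥(G.neighborSet v) :=
    fun o => match o with
    | none => Sum.inl (G.connectedComponentMk v)
    | some C =>
      if h : gm C = G.connectedComponentMk v then Sum.inr (nb C h) else Sum.inl (gm C)
  have Finj : Function.Injective F := by
    intro o1 o2 hF
    match o1, o2 with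
    | none, none => rfl
    | none, some C =>
      simp only [F] at hF
      split_ifs at hF with h
      exact absurd (Sum.inl.inj hF).symm h
    | some C, none =>
      simp only [F] at hF
      split_ifs at hF with h
      exact absurd (Sum.inl.inj hF) h
    | some C1, some C2 =>
      simp only [F] at hF
      split_ifs at hF with h1 h2 h2
      · have hnbeq : nb C1 h1 = nb C2 h2 := Sum.inr.inj hF
        have e1 := heq C1 h1
        have e2 := heq C2 h2
        have hval : (nb C1 h1).val = (nb C2 h2).val := congrArg Subtype.val hnbeq
        have hsub : (⟨(nb C1 h1).val, hmem C1 h1⟩ : ↥({v}ᶜ : Set V))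
            = ⟨(nb C2 h2).val, hmem C2 h2⟩ := Subtype.ext hval
        rw [← e1, ← e2, hsub]
      · exact congrArg some (inj_else C1 C2 (Sum.inl.inj hF) h1)
  have hle := Nat.card_le_card_of_injective F Finj
  have hopt : Nat.card (Option G'.ConnectedComponent)
      = Nat.card G'.ConnectedComponent + 1 := by
    haveI : Fintype G'.ConnectedComponent := Fintype.ofFinite _
    simp [Nat.card_eq_fintype_card]
  have hsum : Nat.card (G.ConnectedComponent ⊕ ↥(G.neighborSet v))
      = Nat.card G.ConnectedComponent + Nat.card ↥(G.neighborSet v) := Nat.card_sum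
  have hN : Nat.card ↥(G.neighborSet v) = G.degree v := by
    rw [Nat.card_eq_fintype_card, G.card_neighborSet_eq_degree]
  rw [hopt, hsum, hN] at hle
  exact hle

lemma color_ext {m : ℕ} (hd : G.degree v < m)
    (h : (G.induce ({v}ᶜ : Set V)).Colorable m) : G.Colorable m := by
  obtain ⟨C⟩ := h
  have hne : ∀ u ∈ G.neighborFinset v, u ≠ v := by
    intro u hu
    exact (G.ne_of_adj ((G.mem_neighborFinset v u).mp hu)).symm
  let T : Finset (Fin m) := (G.neighborFinset v).attach.image
    (fun u => C ⟨u.val, by simpa using hne u.val u.prop⟩)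
  have hT : T.card < m := by
    calc T.card ≤ (G.neighborFinset v).attach.card := Finset.card_image_le
    _ = G.degree v := by rw [Finset.card_attach, card_neighborFinset_eq_degree]
    _ < m := hd
  have hc : ∃ c : Fin m, c ∉ T := by
    by_contra hcon
    push_neg at hcon
    have := Finset.card_le_card (fun c _ => hcon c : (Finset.univ : Finset (Fin m)) ⊆ T)
    rw [Finset.card_univ, Fintype.card_fin] at this
    omega
  obtain ⟨c, hc⟩ := hc
  refine ⟨SimpleGraph.Coloring.mk
    (fun u => if h : u = v then c else C ⟨u, by simp [h]⟩) ?_⟩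
  intro a b hab
  split_ifs with h1 h2 h2
  · exfalso; rw [h1, h2] at hab; exact G.irrefl hab
  · intro hEq
    apply hc
    rw [hEq]
    rw [h1] at hab
    exact Finset.mem_image.mpr ⟨⟨b, (G.mem_neighborFinset v b).mpr hab⟩,
      Finset.mem_attach _ _, rfl⟩
  · intro hEq
    apply hc
    rw [← hEq]
    rw [h2] at hab
    exact Finset.mem_image.mpr ⟨⟨a, (G.mem_neighborFinset v a).mpr hab.symm⟩,
      Finset.mem_attach _ _, rfl⟩
  · have : (G.induce ({v}ᶜ : Set V)).Adj ⟨a, by simp [h1]⟩ ⟨b, by simp [h2]⟩ := by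
      simpa using hab
    exact C.valid this

lemma card_lt_of_not_colorable {m : ℕ} (h : ¬ G.Colorable m) : m + 1 ≤ Fintype.card V := by
  by_contra hcon
  push_neg at hcon
  exact h ((G.colorable_of_fintype).mono (by omega))

lemma lemA : ∀ (n : ℕ) (V : Type) [Fintype V] [DecidableEq V]
    (G : SimpleGraph V) [DecidableRel G.Adj], Fintype.card V = n →
    Fintype.card V ≤ G.edgeFinset.card + Nat.card G.ConnectedComponent := by
  intro n
  induction n with
  | zero => intro V _ _ G _ h; simp [h]
  | succ n ih =>
    intro V _ _ G _ hV
    have hne : Nonempty V := Fintype.card_pos_iff.mp (by omega)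
    obtain ⟨v⟩ := hne
    have hcard : Fintype.card ↥({v}ᶜ : Set V) = n := by
      rw [Fintype.card_compl_set]
      simp [hV]
    have hA := ih ↥({v}ᶜ : Set V) (G.induce ({v}ᶜ : Set V)) hcard
    have hE := edge_del G v
    have hC := comp_del G v
    omega

lemma lemB : ∀ (n : ℕ) (V : Type) [Fintype V] [DecidableEq V]
    (G : SimpleGraph V) [DecidableRel G.Adj], Fintype.card V = n →
    ∀ m : ℕ, 2 ≤ m → ¬ G.Colorable m →
    2 * Fintype.card V + m * m ≤ 2 * G.edgeFinset.card
      + 2 * Nat.card G.ConnectedComponent + m := by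
  intro n
  induction n with
  | zero =>
    intro V _ _ G _ hV m hm hnc
    exact absurd ((G.colorable_of_fintype).mono (by omega)) hnc
  | succ n ih =>
    intro V _ _ G _ hV m hm hnc
    by_cases hdeg : ∃ v : V, G.degree v < m
    · obtain ⟨v, hv⟩ := hdeg
      have hnc' : ¬ (G.induce ({v}ᶜ : Set V)).Colorable m :=
        fun hcol => hnc (color_ext G v hv hcol)
      have hcard : Fintype.card ↥({v}ᶜ : Set V) = n := by
        rw [Fintype.card_compl_set]
        simp [hV]
      have hB := ih ↥({v}ᶜ : Set V) (G.induce ({v}ᶜ : Set V)) hcard m hm hnc'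
      have hE := edge_del G v
      have hC := comp_del G v
      omega
    · push_neg at hdeg
      have hVm : m + 1 ≤ Fintype.card V := card_lt_of_not_colorable G hnc
      have hhs : m * Fintype.card V ≤ 2 * G.edgeFinset.card := by
        rw [← G.sum_degrees_eq_twice_card_edges]
        calc m * Fintype.card V = ∑ _v : V, m := by
              rw [Finset.sum_const, Finset.card_univ]; ring
        _ ≤ ∑ v : V, G.degree v := Finset.sum_le_sum (fun i _ => hdeg i)
      have hcpos : 1 ≤ Nat.card G.ConnectedComponent := by
        have : Nonempty V := Fintype.card_pos_iff.mp (by omega)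
        have : Nonempty G.ConnectedComponent := ⟨G.connectedComponentMk this.some⟩
        exact Nat.card_pos
      obtain ⟨b, hb⟩ : ∃ b, Fintype.card V = m + 1 + b := ⟨Fintype.card V - (m+1), by omega⟩
      have h2b : 2 * b ≤ m * b := Nat.mul_le_mul_right b (by omega)
      have hexp : m * (m + 1 + b) = m * m + m + m * b := by ring
      rw [hb] at hhs ⊢
      rw [hexp] at hhs
      linarith

end MaxChromBetti

open MaxChromBetti

/-- The maximum chromatic number among connected graphs with first Betti number at most `g`
equals `⌊(3 + √(8g+1))/2⌋`, attained by the largest complete graph `K_n` with `β(K_n) ≤ g`. -/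
theorem max_chromatic_given_betti (g : ℕ) :
    IsGreatest {n : ℕ | ∃ (V : Type) (_ : Fintype V) (G : SimpleGraph V)
        (_ : Fintype G.edgeSet), G.Connected ∧
        (G.edgeFinset.card : ℤ) - Fintype.card V + 1 ≤ g ∧
        G.chromaticNumber = n}
      (⌊(3 + Real.sqrt (8 * g + 1)) / 2⌋.toNat) := by
  set x : ℝ := (3 + Real.sqrt (8 * g + 1)) / 2 with hx
  have hg0 : (0:ℝ) ≤ (g:ℝ) := Nat.cast_nonneg g
  have hs1 : (1:ℝ) ≤ Real.sqrt (8*g+1) := Real.le_sqrt_of_sq_le (by nlinarith)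
  have hfl2 : (2:ℤ) ≤ ⌊x⌋ := Int.le_floor.mpr (by push_cast; rw [hx]; linarith)
  set n : ℕ := ⌊x⌋.toNat with hn
  have hnz : (n:ℤ) = ⌊x⌋ := Int.toNat_of_nonneg (by omega)
  have hn2 : 2 ≤ n := by omega
  have hnr : (n:ℝ) ≤ x := by
    rw [show ((n:ℝ)) = ((n:ℤ):ℝ) by push_cast; ring, hnz]
    exact Int.floor_le x
  have hkey : ((n:ℤ)-1)*((n:ℤ)-2) ≤ 2*(g:ℤ) := by
    have hn2r : (2:ℝ) ≤ (n:ℝ) := by exact_mod_cast hn2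
    have h0 : (0:ℝ) ≤ 2*(n:ℝ)-3 := by linarith
    have hle : 2*(n:ℝ)-3 ≤ Real.sqrt (8*g+1) := by rw [hx] at hnr; linarith
    have hsq : (2*(n:ℝ)-3)^2 ≤ 8*(g:ℝ)+1 := by
      calc (2*(n:ℝ)-3)^2 ≤ (Real.sqrt (8*g+1))^2 := pow_le_pow_left₀ h0 hle 2
      _ = 8*(g:ℝ)+1 := Real.sq_sqrt (by positivity)
    have hz : (2*(n:ℤ)-3)^2 ≤ 8*(g:ℤ)+1 := by exact_mod_cast (by push_cast; linarith : ((2*(n:ℤ)-3:ℤ):ℝ)^2 ≤ ((8*(g:ℤ)+1 : ℤ):ℝ))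
    nlinarith [hz]
  constructor
  · -- membership: the complete graph on `Fin n`
    refine ⟨Fin n, inferInstance, (⊤ : SimpleGraph (Fin n)), inferInstance, ?_, ?_, ?_⟩
    · haveI : Nonempty (Fin n) := ⟨⟨0, by omega⟩⟩
      exact connected_top
    · have hE : (⊤ : SimpleGraph (Fin n)).edgeFinset.card = n.choose 2 := by
        rw [card_edgeFinset_top_eq_card_choose_two, Fintype.card_fin]
      rw [hE, Fintype.card_fin]
      have h2c : 2 * (n.choose 2) = n * (n-1) := by
        rw [Nat.choose_two_right]
        apply Nat.mul_div_cancel'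
        have : Even ((n-1) * (n-1+1)) := Nat.even_mul_succ_self (n-1)
        rw [show n - 1 + 1 = n by omega] at this
        rw [mul_comm]
        exact this.two_dvd
      have h2cz : 2 * ((n.choose 2 : ℤ)) = (n:ℤ) * ((n:ℤ)-1) := by
        have h1n : (1:ℕ) ≤ n := by omega
        have hcast := congrArg (Nat.cast : ℕ → ℤ) h2c
        push_cast [Nat.cast_sub h1n] at hcast
        linarith
      have hr : (n:ℤ)*((n:ℤ)-1) - 2*(n:ℤ) + 2 = ((n:ℤ)-1)*((n:ℤ)-2) := by ring
      linarith
    · rw [chromaticNumber_top, Fintype.card_fin]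
  · -- upper bound
    rintro k ⟨V, hfV, G, hfE, hconn, hbetti, hchrom⟩
    by_cases hk : k ≤ 2
    · omega
    push_neg at hk
    haveI : DecidableEq V := Classical.decEq V
    haveI : DecidableRel G.Adj := Classical.decRel _
    have hicongr : hfE = G.fintypeEdgeSet := Subsingleton.elim _ _
    subst hicongr
    have hncol : ¬ G.Colorable (k-1) := by
      intro hc
      have h1 := (chromaticNumber_le_iff_colorable (G := G)).mpr hc
      rw [hchrom] at h1
      have h2 : k ≤ k - 1 := by exact_mod_cast h1
      omega
    have hB := lemB (Fintype.card V) V G rfl (k-1) (by omega) hncol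
    have hc1 : Nat.card G.ConnectedComponent = 1 := by
      rw [Nat.card_eq_one_iff_unique]
      constructor
      · constructor
        intro C1 C2
        obtain ⟨a, rfl⟩ := C1.exists_rep
        obtain ⟨b, rfl⟩ := C2.exists_rep
        exact ConnectedComponent.sound (hconn.preconnected a b)
      · exact ⟨G.connectedComponentMk hconn.nonempty.some⟩
    rw [hc1] at hB
    have hk1 : (1:ℕ) ≤ k - 1 := by omega
    have hBz : 2 * (Fintype.card V : ℤ) + ((k:ℤ)-1)*((k:ℤ)-1)
        ≤ 2 * (G.edgeFinset.card : ℤ) + 2 * 1 + ((k:ℤ)-1) := by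
      have h := (Nat.cast_le (α := ℤ)).mpr hB
      push_cast [Nat.cast_sub (by omega : 1 ≤ k)] at h
      linarith
    have hkk : ((k:ℤ)-1)*((k:ℤ)-2) ≤ 2*(g:ℤ) := by nlinarith [hbetti, hBz]
    suffices hkx : (k:ℤ) ≤ ⌊x⌋ by omega
    apply Int.le_floor.mpr
    have hkkr : ((k:ℝ)-1)*((k:ℝ)-2) ≤ 2*(g:ℝ) := by exact_mod_cast hkk
    have hles : (2*(k:ℝ)-3) ≤ Real.sqrt (8*g+1) := Real.le_sqrt_of_sq_le (by nlinarith)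
    rw [hx]
    push_cast
    linarith
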